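/- Let P be a polynomial in two variables with real coefficients such that for every real h > 0 the limit as x → ∞ (over real x) of P(x, hx) / x² exists and is a finite real number. Then the total degree of P is at most 2. -/

import Mathlib

open MvPolynomial Polynomial Filter

private lemma finsupp_sum_fin2 (m : Fin 2 →₀ ℕ) : (m.sum fun _ e => e) = m 0 + m 1 := by
  rw [Finsupp.sum_fintype _ _ (fun _ => rfl), Fin.sum_univ_two]

/-- If `P` is a real polynomial in two variables such that for every real `h > 0`
the limit of `P(x, hx) / x²` as `x → ∞` exists (as a finite real number), then
the total degree of `P` is at most `2`. -/
theorem totalDegree_le_two_of_normalized_limits (P : MvPolynomial (Fin 2) ℝ)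
    (hP : ∀ h : ℝ, 0 < h → ∃ L : ℝ,
      Filter.Tendsto (fun x : ℝ => MvPolynomial.eval ![x, h * x] P / x ^ 2)
        Filter.atTop (nhds L)) :
    P.totalDegree ≤ 2 := by
  by_contra hd
  push_neg at hd
  set d := P.totalDegree with hdd
  have hP0 : P ≠ 0 := by
    intro h0
    rw [h0, totalDegree_zero] at hdd
    omega
  -- a monomial of maximal total degree
  obtain ⟨m₀, hm₀s, hm₀d⟩ :=
    P.support.exists_mem_eq_sup (MvPolynomial.support_nonempty.mpr hP0)
      (fun m => m.sum fun _ e => e)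
  rw [← MvPolynomial.totalDegree, ← hdd] at hm₀d
  have hm₀deg : m₀ 0 + m₀ 1 = d := by rw [← finsupp_sum_fin2, ← hm₀d]
  -- the polynomial in h giving the coefficient of x^d
  set q : Polynomial ℝ :=
    ∑ m ∈ P.support.filter (fun m => m 0 + m 1 = d),
      Polynomial.C (MvPolynomial.coeff m P) * Polynomial.X ^ (m 1) with hq
  have hqne : q ≠ 0 := by
    intro h0
    have hc : q.coeff (m₀ 1) = MvPolynomial.coeff m₀ P := by
      rw [hq, Polynomial.finset_sum_coeff]
      rw [Finset.sum_eq_single m₀]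
      · simp
      · intro m hm hne
        simp only [Finset.mem_filter] at hm
        rw [Polynomial.coeff_C_mul, Polynomial.coeff_X_pow]
        have h1 : m 1 ≠ m₀ 1 := by
          intro h1
          apply hne
          have h0' : m 0 = m₀ 0 := by omega
          ext i
          fin_cases i
          · exact h0'
          · exact h1
        rw [if_neg (Ne.symm h1), mul_zero]
      · intro hmem
        exact absurd (Finset.mem_filter.mpr ⟨hm₀s, hm₀deg⟩) hmem
    rw [h0] at hc
    simp only [Polynomial.coeff_zero] at hc
    exact (MvPolynomial.mem_support_iff.mp hm₀s) hc.symm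
  -- choose h > 0 which is not a root of q
  obtain ⟨h, hh⟩ := ((Set.Ioi_infinite (0:ℝ)).diff (q.finite_setOf_isRoot hqne)).nonempty
  obtain ⟨hhpos, hhroot⟩ := hh
  simp only [Set.mem_setOf_eq, Polynomial.IsRoot] at hhroot
  rw [Set.mem_Ioi] at hhpos
  -- the one-variable polynomial P(x, h x)
  set p : Polynomial ℝ :=
    MvPolynomial.aeval ![Polynomial.X, Polynomial.C h * Polynomial.X] P with hp
  have heval : ∀ x : ℝ, p.eval x = MvPolynomial.eval ![x, h * x] P := by
    intro x
    rw [hp, MvPolynomial.aeval_def, ← Polynomial.coe_evalRingHom,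
      MvPolynomial.eval₂_comp_left]
    rw [MvPolynomial.eval]
    congr 1
    · ext r
      simp [Polynomial.algebraMap_eq]
    · funext i
      fin_cases i <;> simp
  -- the coefficient of x^d in p is q(h) ≠ 0
  have hterm : ∀ m : Fin 2 →₀ ℕ,
      MvPolynomial.aeval ![Polynomial.X, Polynomial.C h * Polynomial.X]
        (MvPolynomial.monomial m (MvPolynomial.coeff m P)) =
      Polynomial.C (MvPolynomial.coeff m P * h ^ (m 1)) *
        Polynomial.X ^ (m 0 + m 1) := by
    intro m
    rw [MvPolynomial.aeval_monomial, Finsupp.prod_fintype _ _ (fun _ => pow_zero _),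
      Fin.prod_univ_two]
    simp only [Matrix.cons_val_zero, Matrix.cons_val_one, Matrix.head_cons]
    rw [Polynomial.algebraMap_eq, map_mul, map_pow, mul_pow, pow_add]
    ring
  have hcoeff : p.coeff d = q.eval h := by
    rw [hp]
    conv_lhs => rw [P.as_sum]
    rw [map_sum, Polynomial.finset_sum_coeff]
    rw [hq, Polynomial.eval_finset_sum, Finset.sum_filter]
    apply Finset.sum_congr rfl
    intro m _
    rw [hterm m, Polynomial.coeff_C_mul, Polynomial.coeff_X_pow]
    by_cases hmd : m 0 + m 1 = d
    · simp [hmd]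
    · have : d ≠ m 0 + m 1 := fun e => hmd e.symm
      simp [hmd, this]
  have hcoeffne : p.coeff d ≠ 0 := by rw [hcoeff]; exact hhroot
  -- so p has degree ≥ d > 2, hence |p(x)/x²| → ∞
  have hdegp : ((Polynomial.X ^ 2 : Polynomial ℝ)).degree < p.degree := by
    rw [Polynomial.degree_X_pow]
    calc ((2 : ℕ) : WithBot ℕ) < (d : WithBot ℕ) := by exact_mod_cast hd
      _ ≤ p.degree := Polynomial.le_degree_of_ne_zero hcoeffne
  have hX2 : (Polynomial.X ^ 2 : Polynomial ℝ) ≠ 0 := by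
    exact pow_ne_zero _ Polynomial.X_ne_zero
  have htop := Polynomial.abs_div_tendsto_atTop_of_degree_gt p (Polynomial.X ^ 2) hdegp hX2
  obtain ⟨L, hL⟩ := hP h hhpos
  have hL' : Tendsto (fun x : ℝ => |p.eval x / (Polynomial.X ^ 2 : Polynomial ℝ).eval x|)
      atTop (nhds |L|) := by
    apply Filter.Tendsto.abs
    have : (fun x : ℝ => p.eval x / (Polynomial.X ^ 2 : Polynomial ℝ).eval x) =
        (fun x : ℝ => MvPolynomial.eval ![x, h * x] P / x ^ 2) := by
      funext x
      rw [heval x]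
      simp
    rw [this]
    exact hL
  exact not_tendsto_atTop_of_tendsto_nhds hL' htop
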